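/- Fix $\nu > 0$, $m \in (0,1)$ and $c \in \mathbb{R}$ with $c \leq m - 1 - \log m$, and define $\varphi(K) = \left(c + 1 - \frac{1}{K} - \log K\right) \cdot \frac{K\nu}{1 - Km}$ for $K \in (0, 1/m)$. Then $\sup_{0 < K < 1/m} \varphi(K) = \nu(\hat{x} - 1)$, where $\hat{x}$ is the minimal solution $x \geq 0$ of the equation $x = e^{c + m(x-1)}$ (which exists under the stated condition on $c$). -/

import Mathlib

open MeasureTheory Filter Set

set_option maxHeartbeats 1000000 in
/-- for `ν > 0`, `m ∈ (0,1)` and `c ≤ m - 1 - log m`, the minimal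
nonnegative solution `x̂` of `x = e^{c + m(x-1)}` exists, and
`sup_{0<K<1/m} (c + 1 - 1/K - log K) · Kν/(1-Km) = ν (x̂ - 1)`. -/
theorem stmt_5 (ν m c : ℝ) (hν : 0 < ν) (hm0 : 0 < m) (hm1 : m < 1)
    (hc : c ≤ m - 1 - Real.log m) :
    ∃ xh : ℝ, IsLeast {x : ℝ | 0 ≤ x ∧ x = Real.exp (c + m * (x - 1))} xh ∧
      IsLUB ((fun K : ℝ => (c + 1 - 1 / K - Real.log K) * (K * ν / (1 - K * m))) ''
        Ioo 0 (1 / m)) (ν * (xh - 1)) := by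
  have hm' : (0:ℝ) < 1 / m := by positivity
  have hg : Continuous fun x : ℝ => Real.exp (c + m * (x - 1)) :=
    Real.continuous_exp.comp (by fun_prop)
  have hcont : Continuous fun x : ℝ => Real.exp (c + m * (x - 1)) - x :=
    hg.sub continuous_id
  have hf0 : (0:ℝ) ≤ Real.exp (c + m * ((0:ℝ) - 1)) - 0 := by
    simpa using (Real.exp_pos (c + m * ((0:ℝ) - 1))).le
  have hfm : Real.exp (c + m * (1 / m - 1)) - 1 / m ≤ 0 := by
    have hmm : m * m⁻¹ = 1 := mul_inv_cancel₀ hm0.ne'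
    have h1 : c + m * (1 / m - 1) ≤ Real.log (1 / m) := by
      rw [one_div, Real.log_inv]
      nlinarith
    have h2 := Real.exp_le_exp.mpr h1
    rw [Real.exp_log hm'] at h2
    linarith
  obtain ⟨r, hrI, hfr⟩ : ∃ r ∈ Icc (0:ℝ) (1/m),
      (fun x : ℝ => Real.exp (c + m * (x - 1)) - x) r = 0 := by
    have h := intermediate_value_Icc' hm'.le hcont.continuousOn
      (Set.mem_Icc.mpr ⟨hfm, hf0⟩)
    obtain ⟨r, hr, hfr⟩ := h
    exact ⟨r, hr, hfr⟩
  have hrS : r ∈ {x : ℝ | 0 ≤ x ∧ x = Real.exp (c + m * (x - 1))} :=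
    ⟨hrI.1, (sub_eq_zero.mp hfr).symm⟩
  have hSne : {x : ℝ | 0 ≤ x ∧ x = Real.exp (c + m * (x - 1))}.Nonempty := ⟨r, hrS⟩
  have hSbdd : BddBelow {x : ℝ | 0 ≤ x ∧ x = Real.exp (c + m * (x - 1))} :=
    ⟨0, fun x hx => hx.1⟩
  have hSclosed : IsClosed {x : ℝ | 0 ≤ x ∧ x = Real.exp (c + m * (x - 1))} :=
    (isClosed_le continuous_const continuous_id).inter (isClosed_eq continuous_id hg)
  obtain ⟨xh, hxh⟩ : ∃ x : ℝ, x = sInf {x : ℝ | 0 ≤ x ∧ x = Real.exp (c + m * (x - 1))} :=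
    ⟨_, rfl⟩
  have hmem : xh ∈ {x : ℝ | 0 ≤ x ∧ x = Real.exp (c + m * (x - 1))} :=
    hxh ▸ hSclosed.csInf_mem hSne hSbdd
  have hleast : IsLeast {x : ℝ | 0 ≤ x ∧ x = Real.exp (c + m * (x - 1))} xh :=
    ⟨hmem, fun y hy => hxh ▸ csInf_le hSbdd hy⟩
  have hx0 : 0 ≤ xh := hmem.1
  have hxeq : xh = Real.exp (c + m * (xh - 1)) := hmem.2
  have hxpos : 0 < xh := hxeq ▸ Real.exp_pos _
  have hxle : xh ≤ 1 / m := hxh ▸ le_trans (csInf_le hSbdd hrS) hrI.2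
  have hlogx : Real.log xh = c + m * (xh - 1) := by
    have h := congrArg Real.log hxeq
    rwa [Real.log_exp] at h
  have hmx : m * xh ≤ 1 := by
    rw [le_div_iff₀ hm0] at hxle; linarith
  clear hg hcont hf0 hfm hfr hrI hrS hSne hSbdd hSclosed hxh hmem hxeq
  refine ⟨xh, hleast, ?_, ?_⟩
  · -- upper bound
    rintro y ⟨K, ⟨hK0, hKm⟩, rfl⟩
    have hD : 0 < 1 - K * m := by
      rw [lt_div_iff₀ hm0] at hKm; linarith
    have h1 : K * (Real.log xh - Real.log K) ≤ xh - K := by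
      have hlog := Real.log_le_sub_one_of_pos (div_pos hxpos hK0)
      rw [Real.log_div hxpos.ne' hK0.ne'] at hlog
      have hxK : K * (xh / K) = xh := by field_simp
      nlinarith [mul_le_mul_of_nonneg_left hlog hK0.le]
    show (c + 1 - 1 / K - Real.log K) * (K * ν / (1 - K * m)) ≤ ν * (xh - 1)
    have hKK : 1 / K * K = 1 := one_div_mul_cancel hK0.ne'
    have hAK : (c + 1 - 1 / K - Real.log K) * (K * ν / (1 - K * m))
        = (c * K + K - 1 - Real.log K * K) * ν / (1 - K * m) := by
      rw [show (c + 1 - 1 / K - Real.log K) * (K * ν / (1 - K * m))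
          = ((c + 1 - 1 / K - Real.log K) * K) * ν / (1 - K * m) from by ring,
        show (c + 1 - 1 / K - Real.log K) * K = c * K + K - 1 - Real.log K * K from by
          linear_combination (-1 : ℝ) * hKK]
    rw [hAK, div_le_iff₀ hD]
    have hcKν : c * K * ν = (Real.log xh - m * (xh - 1)) * K * ν := by
      rw [hlogx]; ring
    nlinarith [mul_le_mul_of_nonneg_left h1 hν.le, hcKν]
  · -- least upper bound
    intro b hb
    refine le_of_forall_pos_le_add fun ε hε => ?_
    obtain ⟨δ, hδdef⟩ : ∃ δ : ℝ, δ = min (xh / 2) (ε * m * xh / ν) := ⟨_, rfl⟩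
    have hδpos : 0 < δ := hδdef ▸ lt_min (by positivity) (by positivity)
    have hδle : δ ≤ xh / 2 := hδdef ▸ min_le_left _ _
    obtain ⟨K, hKdef⟩ : ∃ K : ℝ, K = xh - δ := ⟨_, rfl⟩
    have hK0 : 0 < K := by rw [hKdef]; linarith
    have hKx : K < xh := by rw [hKdef]; linarith
    have hKm : K < 1 / m := lt_of_lt_of_le hKx hxle
    have hb' : (c + 1 - 1 / K - Real.log K) * (K * ν / (1 - K * m)) ≤ b :=
      hb ⟨K, ⟨hK0, hKm⟩, rfl⟩
    have hD : 0 < 1 - K * m := by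
      rw [lt_div_iff₀ hm0] at hKm; linarith
    have hDm : m * (xh - K) ≤ 1 - K * m := by nlinarith
    have h2 : K * (xh - K) ≤ xh * (K * (Real.log xh - Real.log K)) := by
      have hlog := Real.log_le_sub_one_of_pos (div_pos hK0 hxpos)
      rw [Real.log_div hK0.ne' hxpos.ne'] at hlog
      have hKx' : xh * (K / xh) = K := by field_simp
      nlinarith [mul_le_mul_of_nonneg_left hlog hxpos.le,
        mul_le_mul_of_nonneg_left (mul_le_mul_of_nonneg_left hlog hxpos.le) hK0.le]
    have hδν : ν * δ ≤ ε * (m * xh) := by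
      have h := min_le_right (xh / 2) (ε * m * xh / ν)
      rw [le_div_iff₀ hν] at h
      rw [hδdef]
      nlinarith [h]
    have hkey : ν * (xh - 1) - ε ≤ (c + 1 - 1 / K - Real.log K) * (K * ν / (1 - K * m)) := by
      have hKK : 1 / K * K = 1 := one_div_mul_cancel hK0.ne'
      have hAK : (c + 1 - 1 / K - Real.log K) * (K * ν / (1 - K * m))
          = (c * K + K - 1 - Real.log K * K) * ν / (1 - K * m) := by
        rw [show (c + 1 - 1 / K - Real.log K) * (K * ν / (1 - K * m))
            = ((c + 1 - 1 / K - Real.log K) * K) * ν / (1 - K * m) from by ring,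
          show (c + 1 - 1 / K - Real.log K) * K = c * K + K - 1 - Real.log K * K from by
            linear_combination (-1 : ℝ) * hKK]
      rw [hAK, le_div_iff₀ hD]
      have hcKx : c * K * ν * xh = (Real.log xh - m * (xh - 1)) * K * ν * xh := by
        rw [hlogx]; ring
      have hδK : δ = xh - K := by rw [hKdef]; ring
      have h3 := mul_le_mul_of_nonneg_right hδν hδpos.le
      rw [hδK] at h3
      have hgoal2 : xh * ((ν * (xh - 1) - ε) * (1 - K * m))
          ≤ xh * ((c * K + K - 1 - Real.log K * K) * ν) := by
        nlinarith [mul_le_mul_of_nonneg_left h2 hν.le, h3,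
          mul_le_mul_of_nonneg_right (mul_le_mul_of_nonneg_left hDm hε.le) hxpos.le,
          hcKx]
      exact (mul_le_mul_iff_right₀ hxpos).mp hgoal2
    linarith only [hkey, hb']
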